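/- For p ∈ [0,1], let μ_p = (p/2)(δ_{e₃} + δ_{−e₃}) + (1−p)·ν, where e₃ = (0,0,1) and ν is the uniform probability measure on the equator E = {(cos φ, sin φ, 0) : φ ∈ [0,2π)} of the unit sphere S² of ℝ³. Then g*(μ_p) = √(p² + 4(1−p)²/π²). This quantity is minimized over p ∈ [0,1] uniquely at p = 4/(4+π²), where it equals 2/√(4+π²). Consequently, every Borel probability measure μ on S² supported on E ∪ {e₃, −e₃} satisfies g*(μ) ≥ 2/√(4+π²). -/

import Mathlib

open MeasureTheory Real
open scoped ENNReal

noncomputable section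

abbrev E3 := EuclideanSpace ℝ (Fin 3)

/-- The unit sphere S² in ℝ³. -/
def unitSphere : Set E3 := Metric.sphere (0 : E3) 1

/-- `g C μ` is the supremum over unit vectors `v` of `∫ √(C² + (1−C²)⟨r,v⟩²) dμ(r)`. -/
def g (C : ℝ) (μ : Measure E3) : ℝ :=
  ⨆ v : unitSphere, ∫ r, Real.sqrt (C ^ 2 + (1 - C ^ 2) * (inner ℝ r (v : E3) : ℝ) ^ 2) ∂μ


/-- `gstar μ` is the supremum over unit vectors `v` of `∫ |⟨r,v⟩| dμ(r)`. -/
def gstar (μ : Measure E3) : ℝ :=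
  ⨆ v : unitSphere, ∫ r, |(inner ℝ r (v : E3) : ℝ)| ∂μ


/-- The point `(cos φ, sin φ, 0)` on the equator of the unit sphere. -/
def eqPt (φ : ℝ) : E3 := (WithLp.equiv 2 (Fin 3 → ℝ)).symm ![Real.cos φ, Real.sin φ, 0]

/-- The uniform probability measure on the equator: the pushforward of the normalized
Lebesgue measure on `[0, 2π)` under `φ ↦ (cos φ, sin φ, 0)`. -/
def equatorUniform : Measure E3 :=
  Measure.map eqPt ((ENNReal.ofReal (2 * π))⁻¹ • volume.restrict (Set.Ico 0 (2 * π)))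

/-- The north pole `e₃ = (0,0,1)`. -/
def northPole : E3 := EuclideanSpace.single (2 : Fin 3) (1 : ℝ)

/-- The equator+Z measure `μ_p = (p/2)(δ_{e₃} + δ_{−e₃}) + (1−p)·ν`, where `ν` is the uniform
probability measure on the equator. -/
def equatorZ (p : ℝ) : Measure E3 :=
  ENNReal.ofReal (p / 2) • (Measure.dirac northPole + Measure.dirac (-northPole))
    + ENNReal.ofReal (1 - p) • equatorUniform

lemma eqPt_apply (φ : ℝ) : (eqPt φ : Fin 3 → ℝ) = ![Real.cos φ, Real.sin φ, 0] := rfl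

lemma inner_eqPt (φ : ℝ) (v : E3) :
    (inner ℝ (eqPt φ) v : ℝ) = Real.cos φ * v 0 + Real.sin φ * v 1 := by
  simp [PiLp.inner_apply, Fin.sum_univ_three, eqPt_apply]
  ring

lemma inner_northPole (v : E3) : (inner ℝ northPole v : ℝ) = v 2 := by
  simp [northPole, EuclideanSpace.inner_single_left]

lemma inner_eqPt_northPole (φ : ℝ) : (inner ℝ (eqPt φ) northPole : ℝ) = 0 := by
  simp [northPole, EuclideanSpace.inner_single_right, eqPt_apply]

lemma norm_eqPt (φ : ℝ) : ‖eqPt φ‖ = 1 := by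
  rw [EuclideanSpace.norm_eq]
  convert Real.sqrt_one using 2
  simp [Fin.sum_univ_three, eqPt_apply, sq_abs]


lemma eqPt_mem : ∀ φ, eqPt φ ∈ unitSphere := by
  intro φ; simp [unitSphere, norm_eqPt]

lemma northPole_mem : northPole ∈ unitSphere := by
  simp [unitSphere, northPole, EuclideanSpace.norm_single]

lemma continuous_eqPt : Continuous eqPt := by
  apply (PiLp.continuous_toLp 2 (fun _ : Fin 3 => ℝ)).comp
  apply continuous_pi
  intro i
  fin_cases i <;> simp <;> fun_prop

lemma sin_three_pi_div_two : Real.sin (3*π/2) = -1 := by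
  rw [show 3*π/2 = π + π/2 by ring, Real.sin_add]
  simp

lemma integral_abs_cos : ∫ φ in (0:ℝ)..(2*π), |Real.cos φ| = 4 := by
  have hπ := Real.pi_pos
  have h1 : ∫ φ in (0:ℝ)..(π/2), |Real.cos φ| = 1 := by
    rw [intervalIntegral.integral_congr (g := Real.cos)]
    · simp [integral_cos]
    · intro x hx
      rw [Set.uIcc_of_le (by positivity)] at hx
      exact abs_of_nonneg (Real.cos_nonneg_of_mem_Icc ⟨by linarith [hx.1], hx.2⟩)
  have h2 : ∫ φ in (π/2)..(3*π/2), |Real.cos φ| = 2 := by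
    rw [intervalIntegral.integral_congr (g := fun x => -Real.cos x)]
    · simp [integral_cos, sin_three_pi_div_two]
      ring
    · intro x hx
      rw [Set.uIcc_of_le (by linarith)] at hx
      exact abs_of_nonpos (Real.cos_nonpos_of_pi_div_two_le_of_le hx.1 (by linarith [hx.2]))
  have h3 : ∫ φ in (3*π/2)..(2*π), |Real.cos φ| = 1 := by
    rw [intervalIntegral.integral_congr (g := Real.cos)]
    · simp [integral_cos, sin_three_pi_div_two]
    · intro x hx
      rw [Set.uIcc_of_le (by linarith)] at hx
      have hc : 0 ≤ Real.cos x := by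
        have := Real.cos_nonneg_of_mem_Icc (x := x - 2*π)
          ⟨by linarith [hx.1], by linarith [hx.2]⟩
        rwa [Real.cos_sub_two_pi] at this
      exact abs_of_nonneg hc
  have ic : ∀ a b : ℝ, IntervalIntegrable (fun x => |Real.cos x|) volume a b :=
    fun a b => (Real.continuous_cos.abs).intervalIntegrable a b
  have e1 := intervalIntegral.integral_add_adjacent_intervals (ic 0 (π/2)) (ic (π/2) (3*π/2))
  have e2 := intervalIntegral.integral_add_adjacent_intervals (ic 0 (3*π/2)) (ic (3*π/2) (2*π))
  linarith [h1, h2, h3, e1, e2]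

lemma integral_abs_cos_shift (ψ : ℝ) : ∫ φ in (0:ℝ)..(2*π), |Real.cos (φ - ψ)| = 4 := by
  have hper : Function.Periodic (fun φ => |Real.cos (φ - ψ)|) (2*π) := by
    intro x; simp [show x + 2*π - ψ = (x - ψ) + 2*π by ring, Real.cos_add_two_pi]
  have := hper.intervalIntegral_add_eq 0 (ψ)
  simp only [zero_add] at this
  rw [this]
  have : ∀ φ, |Real.cos (φ - ψ)| = (fun t => |Real.cos t|) (φ - ψ) := fun _ => rfl
  rw [intervalIntegral.integral_comp_sub_right (fun t => |Real.cos t|) ψ]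
  simpa using integral_abs_cos

lemma integral_abs_lin (a b : ℝ) :
    ∫ φ in (0:ℝ)..(2*π), |a * Real.cos φ + b * Real.sin φ| = 4 * Real.sqrt (a^2 + b^2) := by
  rcases eq_or_ne (a^2 + b^2) 0 with h | h
  · have ha : a = 0 := by nlinarith [sq_nonneg a, sq_nonneg b]
    have hb : b = 0 := by nlinarith [sq_nonneg a, sq_nonneg b]
    simp [ha, hb]
  · set z : ℂ := ⟨a, b⟩ with hz
    have hz0 : z ≠ 0 := by
      simp only [ne_eq, Complex.ext_iff, Complex.zero_re, Complex.zero_im, hz]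
      intro ⟨h1, h2⟩; exact h (by simp [h1, h2])
    have habs : ‖z‖ = Real.sqrt (a^2 + b^2) := by
      rw [Complex.norm_def, Complex.normSq_mk]; ring_nf
    have hcos := Complex.cos_arg hz0
    have hsin := Complex.sin_arg z
    have key : ∀ φ, a * Real.cos φ + b * Real.sin φ
        = Real.sqrt (a^2 + b^2) * Real.cos (φ - z.arg) := by
      intro φ
      have hR : Real.sqrt (a^2 + b^2) ≠ 0 := by
        intro h0
        exact h (by nlinarith [Real.sq_sqrt (by positivity : (0:ℝ) ≤ a^2+b^2), h0])
      rw [habs] at hcos hsin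
      have hre : z.re = a := rfl
      have him : z.im = b := rfl
      rw [hre] at hcos; rw [him] at hsin
      rw [Real.cos_sub, hcos, hsin]
      field_simp
    simp only [key]
    have hs : 0 ≤ Real.sqrt (a^2 + b^2) := Real.sqrt_nonneg _
    simp only [abs_mul, abs_of_nonneg hs]
    rw [intervalIntegral.integral_const_mul, integral_abs_cos_shift]
    ring



lemma continuous_innerAbs (v : E3) : Continuous (fun r : E3 => |(inner ℝ r v : ℝ)|) :=
  (continuous_id.inner continuous_const).abs

lemma integrable_dirac'' {f : E3 → ℝ} (hf : Continuous f) (a : E3) :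
    Integrable f (Measure.dirac a) := by
  refine ⟨hf.aestronglyMeasurable, ?_⟩
  simp [HasFiniteIntegral, lintegral_dirac]

lemma integrable_equatorUniform {f : E3 → ℝ} (hf : Continuous f) :
    Integrable f equatorUniform := by
  rw [equatorUniform, integrable_map_measure hf.aestronglyMeasurable
    continuous_eqPt.aemeasurable]
  have h1 : IntegrableOn (f ∘ eqPt) (Set.Ico 0 (2*π)) volume :=
    ((hf.comp continuous_eqPt).integrableOn_Icc).mono_set Set.Ico_subset_Icc_self
  exact h1.smul_measure (ENNReal.inv_ne_top.2 (by simp [Real.pi_pos, Real.pi_ne_zero]))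

lemma integral_equatorUniform {f : E3 → ℝ} (hf : Continuous f) :
    ∫ r, f r ∂equatorUniform = (2*π)⁻¹ * ∫ φ in (0:ℝ)..(2*π), f (eqPt φ) := by
  rw [equatorUniform, integral_map continuous_eqPt.aemeasurable hf.aestronglyMeasurable,
    integral_smul_measure]
  rw [ENNReal.toReal_inv, ENNReal.toReal_ofReal (by positivity)]
  rw [MeasureTheory.integral_Ico_eq_integral_Ioo, ← MeasureTheory.integral_Ioc_eq_integral_Ioo,
    ← intervalIntegral.integral_of_le (by positivity)]
  simp [smul_eq_mul]

lemma integrable_equatorZ {f : E3 → ℝ} (hf : Continuous f) (p : ℝ) :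
    Integrable f (equatorZ p) := by
  rw [equatorZ]
  refine Integrable.add_measure ?_ ((integrable_equatorUniform hf).smul_measure ENNReal.ofReal_ne_top)
  refine Integrable.smul_measure ?_ ENNReal.ofReal_ne_top
  exact Integrable.add_measure (integrable_dirac'' hf _) (integrable_dirac'' hf _)

lemma integral_equatorZ {f : E3 → ℝ} (hf : Continuous f) {p : ℝ} (hp : p ∈ Set.Icc (0:ℝ) 1) :
    ∫ r, f r ∂(equatorZ p)
      = p/2 * (f northPole + f (-northPole))
        + (1-p) * ((2*π)⁻¹ * ∫ φ in (0:ℝ)..(2*π), f (eqPt φ)) := by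
  rw [equatorZ, integral_add_measure, integral_smul_measure, integral_smul_measure,
    integral_add_measure (integrable_dirac'' hf _) (integrable_dirac'' hf _),
    integral_dirac, integral_dirac, integral_equatorUniform hf,
    ENNReal.toReal_ofReal (by linarith [hp.1, hp.2]),
    ENNReal.toReal_ofReal (by linarith [hp.2])]
  · simp only [smul_eq_mul]
  · exact (Integrable.add_measure (integrable_dirac'' hf _) (integrable_dirac'' hf _)).smul_measure
      ENNReal.ofReal_ne_top
  · exact (integrable_equatorUniform hf).smul_measure ENNReal.ofReal_ne_top

lemma F_equatorZ {p : ℝ} (hp : p ∈ Set.Icc (0:ℝ) 1) (v : E3) :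
    ∫ r, |(inner ℝ r v : ℝ)| ∂(equatorZ p)
      = p * |v 2| + (1-p) * (2/π) * Real.sqrt ((v 0)^2 + (v 1)^2) := by
  rw [integral_equatorZ (continuous_innerAbs v) hp]
  have h1 : |(inner ℝ northPole v : ℝ)| = |v 2| := by rw [inner_northPole]
  have h2 : |(inner ℝ (-northPole) v : ℝ)| = |v 2| := by rw [inner_neg_left, abs_neg, inner_northPole]
  have h3 : (∫ φ in (0:ℝ)..(2*π), |(inner ℝ (eqPt φ) v : ℝ)|)
      = 4 * Real.sqrt ((v 0)^2 + (v 1)^2) := by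
    rw [← integral_abs_lin (v 0) (v 1)]
    apply intervalIntegral.integral_congr
    intro φ _
    simp only [inner_eqPt]
    ring_nf
  rw [h1, h2, h3]
  have hπ := Real.pi_ne_zero
  field_simp
  ring


instance : Nonempty ↥unitSphere := ⟨⟨northPole, northPole_mem⟩⟩

lemma sum_sq_of_unit {v : E3} (hv : v ∈ unitSphere) :
    (v 0)^2 + (v 1)^2 + (v 2)^2 = 1 := by
  have h : ‖v‖ = 1 := by simpa [unitSphere] using hv
  rw [EuclideanSpace.norm_eq] at h
  have := congrArg (· ^ 2) h
  simp only [one_pow] at this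
  rw [Real.sq_sqrt (by positivity)] at this
  simpa [Fin.sum_univ_three, Real.norm_eq_abs, sq_abs] using this

lemma cauchy_bound {p k c s : ℝ} (hp : 0 ≤ p) (hk : 0 ≤ k) (hc : 0 ≤ c) (hs : 0 ≤ s)
    (h : c^2 + s^2 = 1) : p * c + k * s ≤ Real.sqrt (p^2 + k^2) := by
  have h2 : (p*c + k*s)^2 ≤ p^2 + k^2 := by nlinarith [sq_nonneg (p*s - k*c)]
  have := Real.sqrt_le_sqrt h2
  rwa [Real.sqrt_sq (by positivity)] at this

lemma gstar_eq {p : ℝ} (hp : p ∈ Set.Icc (0:ℝ) 1) :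
    gstar (equatorZ p) = Real.sqrt (p^2 + 4*(1-p)^2/π^2) := by
  have hπ := Real.pi_pos
  set k : ℝ := (1-p) * (2/π) with hk
  have hk0 : 0 ≤ k := by
    have := hp.2
    have : 0 ≤ 1 - p := by linarith
    positivity
  have harg : p^2 + 4*(1-p)^2/π^2 = p^2 + k^2 := by rw [hk]; field_simp; ring
  have hN2 : 0 < p^2 + k^2 := by
    rcases eq_or_ne p 0 with h0 | h0
    · have : k = 2/π := by rw [hk, h0]; ring
      rw [this, h0]; positivity
    · have : 0 < p^2 := by positivity
      nlinarith [sq_nonneg k]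
  set N : ℝ := Real.sqrt (p^2 + k^2) with hN
  have hNpos : 0 < N := Real.sqrt_pos.2 hN2
  have hNsq : N^2 = p^2 + k^2 := Real.sq_sqrt hN2.le
  -- upper bound
  have hub : ∀ v : unitSphere, ∫ r, |(inner ℝ r (v : E3) : ℝ)| ∂(equatorZ p) ≤ N := by
    rintro ⟨v, hv⟩
    rw [F_equatorZ hp v]
    have hsum := sum_sq_of_unit hv
    have hs2 : (Real.sqrt ((v 0)^2 + (v 1)^2))^2 = (v 0)^2 + (v 1)^2 :=
      Real.sq_sqrt (by positivity)
    have : (1-p) * (2/π) * Real.sqrt ((v 0)^2 + (v 1)^2) = k * Real.sqrt ((v 0)^2 + (v 1)^2) := by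
      rw [hk]
    rw [this]
    apply cauchy_bound hp.1 hk0 (abs_nonneg _) (Real.sqrt_nonneg _)
    rw [hs2, sq_abs]
    linarith
  -- attainment
  set v₀ : E3 := (WithLp.equiv 2 (Fin 3 → ℝ)).symm ![k/N, 0, p/N] with hv₀
  have hv₀app : (v₀ : Fin 3 → ℝ) = ![k/N, 0, p/N] := rfl
  have he0 : v₀ 0 = k/N := rfl
  have he1 : v₀ 1 = 0 := rfl
  have he2 : v₀ 2 = p/N := rfl
  have hv₀mem : v₀ ∈ unitSphere := by
    simp only [unitSphere, Metric.mem_sphere, dist_zero_right]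
    rw [EuclideanSpace.norm_eq, Fin.sum_univ_three, he0, he1, he2]
    simp only [Real.norm_eq_abs, sq_abs]
    rw [show (k/N)^2 + 0^2 + (p/N)^2 = (p^2 + k^2)/N^2 by ring, hNsq, div_self hN2.ne']
    exact Real.sqrt_one
  have hval : ∫ r, |(inner ℝ r (v₀ : E3) : ℝ)| ∂(equatorZ p) = N := by
    rw [F_equatorZ hp v₀, he0, he1, he2]
    rw [abs_of_nonneg (div_nonneg hp.1 hNpos.le)]
    rw [show (k/N)^2 + (0:ℝ)^2 = (k/N)^2 by ring, Real.sqrt_sq (div_nonneg hk0 hNpos.le)]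
    rw [show (1-p) * (2/π) = k from rfl]
    field_simp
    linarith [hNsq]
  rw [harg]
  apply le_antisymm
  · exact ciSup_le hub
  · have hba : BddAbove (Set.range fun v : unitSphere =>
        ∫ r, |(inner ℝ r (v : E3) : ℝ)| ∂(equatorZ p)) := by
      refine ⟨N, ?_⟩
      rintro x ⟨v, rfl⟩
      exact hub v
    have := le_ciSup hba (⟨v₀, hv₀mem⟩ : unitSphere)
    rw [hval] at this
    exact this

lemma p0_mem : 4 / (4 + π^2) ∈ Set.Icc (0:ℝ) 1 := by
  have hπ := Real.pi_pos
  constructor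
  · positivity
  · rw [div_le_one (by positivity)]; nlinarith

lemma sqrt_four : Real.sqrt 4 = 2 := by
  rw [show (4:ℝ) = 2^2 by norm_num, Real.sqrt_sq (by norm_num)]

lemma gstar_p0 : gstar (equatorZ (4 / (4 + π^2))) = 2 / Real.sqrt (4 + π^2) := by
  have hπ := Real.pi_pos
  rw [gstar_eq p0_mem]
  have h : (4/(4+π^2))^2 + 4*(1 - 4/(4+π^2))^2/π^2 = 4/(4+π^2) := by
    field_simp
    ring
  rw [h, Real.sqrt_div (by norm_num : (0:ℝ) ≤ 4), sqrt_four]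

lemma quad_gt {p : ℝ} (hne : p ≠ 4 / (4 + π^2)) :
    4/(4+π^2) < p^2 + 4*(1-p)^2/π^2 := by
  have hπ := Real.pi_pos
  have hd : ((4+π^2)*p - 4) ≠ 0 := by
    intro h0
    apply hne
    field_simp
    linarith
  have hd2 : 0 < ((4+π^2)*p - 4)^2 := by positivity
  rw [div_lt_iff₀ (by positivity), ← sub_pos]
  have expand : (p^2 + 4*(1-p)^2/π^2) * (4+π^2) - 4 = ((4+π^2)*p-4)^2/π^2 := by
    field_simp
    ring
  rw [expand]
  positivity

lemma eqPt_range_eq : Set.range eqPt = eqPt '' Set.Icc 0 (2*π) := by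
  apply Set.Subset.antisymm
  · rintro _ ⟨φ, rfl⟩
    have h2π : 0 < 2*π := by positivity
    refine ⟨φ - 2*π * ⌊φ/(2*π)⌋, ⟨?_, ?_⟩, ?_⟩
    · have := Int.sub_floor_div_mul_nonneg φ h2π
      linarith
    · have := Int.sub_floor_div_mul_lt φ h2π
      linarith
    · have hc : ∀ ψ : ℝ, ∀ n : ℤ, eqPt (ψ - n * (2*π)) = eqPt ψ := by
        intro ψ n
        simp only [eqPt]
        congr 1
        rw [Real.cos_sub_int_mul_two_pi, Real.sin_sub_int_mul_two_pi]
      have := hc φ ⌊φ/(2*π)⌋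
      rw [← this]
      congr 1
      ring
  · exact Set.image_subset_range _ _

lemma isClosed_rangeEqPt : IsClosed (Set.range eqPt) := by
  rw [eqPt_range_eq]
  exact (isCompact_Icc.image continuous_eqPt).isClosed

lemma northPole_two : northPole 2 = 1 := by
  simp [northPole, EuclideanSpace.single_apply]

lemma norm_mem_union {r : E3} (hr : r ∈ Set.range eqPt ∪ {northPole, -northPole}) : ‖r‖ = 1 := by
  rcases hr with ⟨φ, rfl⟩ | hr
  · exact norm_eqPt φ
  · have hn : ‖northPole‖ = 1 := by
      simpa [unitSphere] using northPole_mem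
    rcases hr with rfl | rfl
    · exact hn
    · rw [norm_neg]; exact hn

lemma northPole_not_mem_range : northPole ∉ Set.range eqPt := by
  rintro ⟨φ, hφ⟩
  have : eqPt φ 2 = northPole 2 := by rw [hφ]
  rw [northPole_two] at this
  simpa [eqPt_apply] using this

lemma neg_northPole_not_mem_range : -northPole ∉ Set.range eqPt := by
  rintro ⟨φ, hφ⟩
  have : eqPt φ 2 = (-northPole) 2 := by rw [hφ]
  have h2 : (-northPole) 2 = -1 := by
    simp [northPole, EuclideanSpace.single_apply]
  rw [h2] at this
  simpa [eqPt_apply] using this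

lemma quad_ge {q : ℝ} : 4/(4+π^2) ≤ q^2 + 4*(1-q)^2/π^2 := by
  have hπ := Real.pi_pos
  rw [div_le_iff₀ (by positivity), ← sub_nonneg]
  have expand : (q^2 + 4*(1-q)^2/π^2) * (4+π^2) - 4 = ((4+π^2)*q-4)^2/π^2 := by
    field_simp
    ring
  rw [expand]
  positivity

set_option maxHeartbeats 1000000 in
lemma lower_bound (μ : Measure E3) (hprob : IsProbabilityMeasure μ)
    (hsupp : μ (Set.range eqPt ∪ {northPole, -northPole})ᶜ = 0) :
    2 / Real.sqrt (4 + π ^ 2) ≤ gstar μ := by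
  have hπ := Real.pi_pos
  set A : Set E3 := Set.range eqPt with hAdef
  set B : Set E3 := {northPole, -northPole} with hBdef
  have hA : MeasurableSet A := isClosed_rangeEqPt.measurableSet
  have hB : MeasurableSet B :=
    ((Set.finite_singleton _).insert _).measurableSet
  have hdisj : Disjoint A B := by
    rw [Set.disjoint_right]
    rintro r (rfl | rfl)
    · exact northPole_not_mem_range
    · exact neg_northPole_not_mem_range
  have hAUB : μ (A ∪ B) = 1 := by
    have h := measure_add_measure_compl (hA.union hB) (μ := μ)
    rw [hsupp, add_zero] at h
    rw [h, measure_univ]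
  have hsum : μ A + μ B = 1 := by
    rw [← measure_union hdisj hB, hAUB]
  set q : ℝ := (μ B).toReal with hq
  set m : ℝ := (μ A).toReal with hm
  have hAfin : μ A ≠ ⊤ := measure_ne_top μ A
  have hBfin : μ B ≠ ⊤ := measure_ne_top μ B
  have hqm : m + q = 1 := by
    rw [hq, hm, ← ENNReal.toReal_add hAfin hBfin, hsum, ENNReal.toReal_one]
  have hq0 : 0 ≤ q := ENNReal.toReal_nonneg
  have hm0 : 0 ≤ m := ENNReal.toReal_nonneg
  -- a.e. unit norm
  have haeu : ∀ᵐ r ∂μ, ‖r‖ = 1 := by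
    rw [ae_iff]
    refine measure_mono_null ?_ hsupp
    intro r hr
    simp only [Set.mem_setOf_eq] at hr
    intro hmem
    exact hr (norm_mem_union hmem)
  -- integrability of F-integrands
  have hint : ∀ v : E3, Integrable (fun r => |(inner ℝ r v : ℝ)|) μ := by
    intro v
    refine Integrable.mono' (integrable_const ‖v‖) (continuous_innerAbs v).aestronglyMeasurable ?_
    filter_upwards [haeu] with r hr
    rw [Real.norm_eq_abs, abs_abs]
    calc |(inner ℝ r v : ℝ)| ≤ ‖r‖ * ‖v‖ := abs_real_inner_le_norm r v
    _ = ‖v‖ := by rw [hr, one_mul]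
  -- upper bound 1 for all unit vectors (for BddAbove)
  have hub : ∀ v : unitSphere, ∫ r, |(inner ℝ r (v : E3) : ℝ)| ∂μ ≤ 1 := by
    rintro ⟨v, hv⟩
    have hvn : ‖v‖ = 1 := by simpa [unitSphere] using hv
    calc ∫ r, |(inner ℝ r v : ℝ)| ∂μ ≤ ∫ _, (1:ℝ) ∂μ := by
          apply integral_mono_ae (hint v) (integrable_const 1)
          filter_upwards [haeu] with r hr
          calc |(inner ℝ r v : ℝ)| ≤ ‖r‖ * ‖v‖ := abs_real_inner_le_norm r v
          _ = 1 := by rw [hr, hvn, one_mul]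
    _ = 1 := by simp
  have hba : BddAbove (Set.range fun v : unitSphere =>
      ∫ r, |(inner ℝ r (v : E3) : ℝ)| ∂μ) := by
    refine ⟨1, ?_⟩
    rintro x ⟨v, rfl⟩
    exact hub v
  -- Fubini: find a good horizontal direction
  set σ : Measure ℝ := volume.restrict (Set.Ico 0 (2*π)) with hσ
  haveI : IsFiniteMeasure σ := by
    constructor
    rw [hσ, Measure.restrict_apply_univ, Real.volume_Ico]
    exact ENNReal.ofReal_lt_top
  set μA : Measure E3 := μ.restrict A with hμA
  have haeA : ∀ᵐ r ∂μA, r ∈ A := ae_restrict_mem hA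
  have haeuA : ∀ᵐ r ∂μA, ‖r‖ = 1 := by
    filter_upwards [haeA] with r hr
    exact norm_mem_union (Set.mem_union_left _ hr)
  set f : ℝ × E3 → ℝ := fun z => |(inner ℝ z.2 (eqPt z.1) : ℝ)| with hf
  have hfc : Continuous f := (continuous_snd.inner (continuous_eqPt.comp continuous_fst)).abs
  have hfint : Integrable f (σ.prod μA) := by
    refine Integrable.mono' (integrable_const 1) hfc.aestronglyMeasurable ?_
    have hbadnull : μA {r : E3 | ¬ ‖r‖ = 1} = 0 := by
      rw [← ae_iff] ; exact haeuA
    rw [ae_iff]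
    refine measure_mono_null (t := Set.univ ×ˢ {r : E3 | ¬ ‖r‖ = 1}) ?_ ?_
    · rintro ⟨ψ, r⟩ hz
      simp only [Set.mem_setOf_eq, not_le] at hz
      constructor
      · trivial
      · simp only [Set.mem_setOf_eq]
        intro hr
        have : |(inner ℝ r (eqPt ψ) : ℝ)| ≤ 1 := by
          calc |(inner ℝ r (eqPt ψ) : ℝ)| ≤ ‖r‖ * ‖eqPt ψ‖ := abs_real_inner_le_norm _ _
          _ = 1 := by rw [hr, norm_eqPt, one_mul]
        have : ‖f (ψ, r)‖ ≤ 1 := by rwa [Real.norm_eq_abs, abs_abs]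
        linarith [hz]
    · rw [Measure.prod_prod, hbadnull, mul_zero]
  set h : ℝ → ℝ := fun ψ => ∫ r, |(inner ℝ r (eqPt ψ) : ℝ)| ∂μA with hh
  have hhint : Integrable h σ := by
    have := hfint.integral_prod_left
    exact this
  have hswap : ∫ ψ, h ψ ∂σ = ∫ r, (∫ ψ, |(inner ℝ r (eqPt ψ) : ℝ)| ∂σ) ∂μA :=
    integral_integral_swap (f := fun ψ r => |(inner ℝ r (eqPt ψ) : ℝ)|) hfint
  have hinner : ∀ r ∈ A, (∫ ψ, |(inner ℝ r (eqPt ψ) : ℝ)| ∂σ) = 4 := by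
    rintro r ⟨θ, rfl⟩
    rw [hσ, MeasureTheory.integral_Ico_eq_integral_Ioo, ← MeasureTheory.integral_Ioc_eq_integral_Ioo,
      ← intervalIntegral.integral_of_le (by positivity)]
    have : ∀ ψ : ℝ, |(inner ℝ (eqPt θ) (eqPt ψ) : ℝ)|
        = |Real.cos θ * Real.cos ψ + Real.sin θ * Real.sin ψ| := by
      intro ψ
      rw [real_inner_comm, inner_eqPt]
      congr 1
      simp [eqPt_apply]
      ring
    simp only [this]
    rw [integral_abs_lin (Real.cos θ) (Real.sin θ)]
    rw [Real.cos_sq_add_sin_sq, Real.sqrt_one]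
    norm_num
  have htot : ∫ ψ, h ψ ∂σ = 4 * m := by
    rw [hswap]
    rw [hμA, setIntegral_congr_fun hA hinner, setIntegral_const]
    simp [hm, mul_comm, measureReal_def]
  -- choose good direction ψ₀
  have hσuniv : σ Set.univ = ENNReal.ofReal (2*π) := by
    rw [hσ, Measure.restrict_apply_univ, Real.volume_Ico, sub_zero]
  have hσne : σ ≠ 0 := by
    intro h0
    rw [h0] at hσuniv
    simp only [Measure.coe_zero, Pi.zero_apply] at hσuniv
    have := ENNReal.ofReal_pos.2 (by positivity : (0:ℝ) < 2*π)
    rw [← hσuniv] at this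
    exact lt_irrefl _ this
  obtain ⟨ψ₀, hψ₀⟩ := exists_average_le hσne hhint
  have havg : ⨍ ψ, h ψ ∂σ = (2*π)⁻¹ * (4*m) := by
    rw [average_eq, htot, measureReal_def, hσuniv, ENNReal.toReal_ofReal (by positivity)]
    simp [smul_eq_mul]
  have hψ₀' : (2/π) * m ≤ h ψ₀ := by
    rw [havg] at hψ₀
    calc (2/π) * m = (2*π)⁻¹ * (4*m) := by field_simp; ring
    _ ≤ h ψ₀ := hψ₀
  -- construct candidate vector
  set k2 : ℝ := (2/π) * m with hk2
  have hk20 : 0 ≤ k2 := mul_nonneg (by positivity) hm0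
  have hN2 : 0 < q^2 + k2^2 := by
    rcases eq_or_ne q 0 with h0 | h0
    · have hm1 : m = 1 := by rw [h0, add_zero] at hqm; exact hqm
      have : k2 = 2/π := by rw [hk2, hm1, mul_one]
      rw [h0, this]; positivity
    · have : 0 < q^2 := by positivity
      nlinarith [sq_nonneg k2]
  set N : ℝ := Real.sqrt (q^2 + k2^2) with hN
  have hNpos : 0 < N := Real.sqrt_pos.2 hN2
  have hNsq : N^2 = q^2 + k2^2 := Real.sq_sqrt hN2.le
  set sc : ℝ := k2/N with hsc
  have hsc0 : 0 ≤ sc := div_nonneg hk20 hNpos.le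
  set cc : ℝ := q/N with hcc
  have hcc0 : 0 ≤ cc := div_nonneg hq0 hNpos.le
  set v : E3 := (WithLp.equiv 2 (Fin 3 → ℝ)).symm
    ![sc * Real.cos ψ₀, sc * Real.sin ψ₀, cc] with hv
  have hv0 : v 0 = sc * Real.cos ψ₀ := rfl
  have hv1 : v 1 = sc * Real.sin ψ₀ := rfl
  have hv2 : v 2 = cc := rfl
  have hvmem : v ∈ unitSphere := by
    simp only [unitSphere, Metric.mem_sphere, dist_zero_right]
    rw [EuclideanSpace.norm_eq, Fin.sum_univ_three, hv0, hv1, hv2]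
    simp only [Real.norm_eq_abs, sq_abs]
    have : (sc * Real.cos ψ₀)^2 + (sc * Real.sin ψ₀)^2 + cc^2 = sc^2 + cc^2 := by
      have := Real.sin_sq_add_cos_sq ψ₀
      nlinarith [this]
    rw [this, show sc^2 + cc^2 = (q^2+k2^2)/N^2 by rw [hsc, hcc]; ring, hNsq,
      div_self hN2.ne']
    exact Real.sqrt_one
  -- inner ℝ products
  have hinnerA : ∀ r ∈ A, |(inner ℝ r v : ℝ)| = sc * |(inner ℝ r (eqPt ψ₀) : ℝ)| := by
    rintro r ⟨θ, rfl⟩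
    rw [inner_eqPt θ v, hv0, hv1]
    have h2 : (inner ℝ (eqPt θ) (eqPt ψ₀) : ℝ)
        = Real.cos θ * Real.cos ψ₀ + Real.sin θ * Real.sin ψ₀ := by
      rw [real_inner_comm, inner_eqPt]
      simp [eqPt_apply]
      ring
    have h3 : Real.cos θ * (sc * Real.cos ψ₀) + Real.sin θ * (sc * Real.sin ψ₀)
        = sc * (Real.cos θ * Real.cos ψ₀ + Real.sin θ * Real.sin ψ₀) := by ring
    rw [h2, h3, abs_mul, abs_of_nonneg hsc0]
  have hinnerB : ∀ r ∈ B, |(inner ℝ r v : ℝ)| = cc := by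
    rintro r (rfl | rfl)
    · rw [inner_northPole v, hv2, abs_of_nonneg hcc0]
    · rw [inner_neg_left, inner_northPole v, hv2, abs_neg, abs_of_nonneg hcc0]
  -- bound the integral from below
  have hiv := hint v
  have hA_int : ∫ r in A, |(inner ℝ r v : ℝ)| ∂μ = sc * h ψ₀ := by
    rw [setIntegral_congr_fun hA hinnerA, hh]
    rw [MeasureTheory.integral_const_mul]
  have hB_int : ∫ r in B, |(inner ℝ r v : ℝ)| ∂μ = q * cc := by
    rw [setIntegral_congr_fun hB hinnerB, setIntegral_const]
    rw [smul_eq_mul, hq, measureReal_def]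
  have hsplit : sc * h ψ₀ + q * cc ≤ ∫ r, |(inner ℝ r v : ℝ)| ∂μ := by
    calc sc * h ψ₀ + q * cc
        = ∫ r in A ∪ B, |(inner ℝ r v : ℝ)| ∂μ := by
          rw [setIntegral_union hdisj hB hiv.integrableOn hiv.integrableOn, hA_int, hB_int]
    _ ≤ ∫ r, |(inner ℝ r v : ℝ)| ∂μ :=
          setIntegral_le_integral hiv (Filter.Eventually.of_forall fun r => abs_nonneg _)
  have hFv : N ≤ ∫ r, |(inner ℝ r v : ℝ)| ∂μ := by
    have h1 : sc * k2 + q * cc ≤ sc * h ψ₀ + q * cc := by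
      have := mul_le_mul_of_nonneg_left hψ₀' hsc0
      rw [hk2] at *
      linarith [this]
    have h2 : sc * k2 + q * cc = N := by
      rw [hsc, hcc]
      field_simp
      linarith [hNsq]
    linarith [h1, hsplit]
  have hNlb : 2 / Real.sqrt (4 + π^2) ≤ N := by
    have hm1 : m = 1 - q := by linarith [hqm]
    have hk2sq : k2^2 = 4*(1-q)^2/π^2 := by
      rw [hk2, hm1]
      field_simp
      ring
    have : 4/(4+π^2) ≤ q^2 + k2^2 := by rw [hk2sq]; exact quad_ge
    calc 2 / Real.sqrt (4 + π^2) = Real.sqrt (4/(4+π^2)) := by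
          rw [Real.sqrt_div (by norm_num : (0:ℝ) ≤ 4), sqrt_four]
    _ ≤ N := by rw [hN]; exact Real.sqrt_le_sqrt this
  calc 2 / Real.sqrt (4 + π^2) ≤ N := hNlb
  _ ≤ ∫ r, |(inner ℝ r v : ℝ)| ∂μ := hFv
  _ ≤ gstar μ := le_ciSup hba (⟨v, hvmem⟩ : unitSphere)

/-- For `p ∈ [0,1]`, `g*(μ_p) = √(p² + 4(1−p)²/π²)`, which over `p ∈ [0,1]` is minimized
uniquely at `p = 4/(4+π²)` with minimum value `2/√(4+π²)`.  Consequently every Borel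
probability measure supported on the equator together with the poles `±e₃` satisfies
`g*(μ) ≥ 2/√(4+π²)`. -/
theorem gstar_equatorZ :
    (∀ p ∈ Set.Icc (0 : ℝ) 1,
      gstar (equatorZ p) = Real.sqrt (p ^ 2 + 4 * (1 - p) ^ 2 / π ^ 2)) ∧
    gstar (equatorZ (4 / (4 + π ^ 2))) = 2 / Real.sqrt (4 + π ^ 2) ∧
    (∀ p ∈ Set.Icc (0 : ℝ) 1, p ≠ 4 / (4 + π ^ 2) →
      gstar (equatorZ (4 / (4 + π ^ 2))) < gstar (equatorZ p)) ∧
    (∀ μ : Measure E3, IsProbabilityMeasure μ →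
      μ (Set.range eqPt ∪ {northPole, -northPole})ᶜ = 0 →
      2 / Real.sqrt (4 + π ^ 2) ≤ gstar μ) := by
  refine ⟨fun p hp => gstar_eq hp, gstar_p0, fun p hp hne => ?_, lower_bound⟩
  rw [gstar_p0, gstar_eq hp]
  have h : 2 / Real.sqrt (4 + π ^ 2) = Real.sqrt (4 / (4 + π ^ 2)) := by
    rw [Real.sqrt_div (by norm_num : (0:ℝ) ≤ 4), sqrt_four]
  rw [h]
  have hπ := Real.pi_pos
  exact Real.sqrt_lt_sqrt (by positivity) (quad_gt hne)
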